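/- If w is the minimal-length permutation such that w Lambda = Lambda*, then w(Lambda + (1^m)) = Lambda^{circledast}. -/

import Mathlib

/- STATEMENT 12: If `w` is the minimal-length permutation such that `w Λ = Λ*`
   (the decreasing rearrangement of `Λ`), then `w (Λ + (1^m)) = Λ^{⊛}` (the
   decreasing rearrangement of `Λ + (1^m)`).
   Here `Λ` is a composition whose first `m` entries are strictly decreasing and
   whose last `N - m` entries are weakly decreasing; permutations act by
   `(w v)_i = v_{w⁻¹(i)}`; a rearrangement of a vector equals its decreasing
   rearrangement iff it is weakly decreasing (`Antitone`); the Coxeter length of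
   `w` is its number of inversions. -/

open Finset

/-- The Coxeter length of a permutation of `Fin N`, i.e. its number of inversions. -/
def permLength {N : ℕ} (w : Equiv.Perm (Fin N)) : ℕ :=
  ((Finset.univ : Finset (Fin N × Fin N)).filter
    (fun p => p.1 < p.2 ∧ w p.2 < w p.1)).card

lemma swap_eval {N : ℕ} (Λ : Fin N → ℕ) (a b x : Fin N) (h : Λ a = Λ b) :
    Λ (Equiv.swap a b x) = Λ x := by
  rcases eq_or_ne x a with rfl | hxa
  · rw [Equiv.swap_apply_left, h]
  rcases eq_or_ne x b with rfl | hxb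
  · rw [Equiv.swap_apply_right, h]
  · rw [Equiv.swap_apply_of_ne_of_ne hxa hxb]

lemma permLength_swap_lt {N : ℕ} (w : Equiv.Perm (Fin N)) (a b : Fin N) (hba : b < a)
    (hwab : w a < w b) :
    permLength (w * Equiv.swap a b) < permLength w := by
  classical
  set invU := ((Finset.univ : Finset (Fin N × Fin N)).filter
    (fun p => p.1 < p.2 ∧ (w * Equiv.swap a b) p.2 < (w * Equiv.swap a b) p.1)) with hinvU
  set invW := ((Finset.univ : Finset (Fin N × Fin N)).filter
    (fun p => p.1 < p.2 ∧ w p.2 < w p.1)) with hinvW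
  have hba' : (b, a) ∈ invW := by
    simp [hinvW, hba, hwab]
  set F : Fin N × Fin N → Fin N × Fin N :=
    fun p => if Equiv.swap a b p.1 < Equiv.swap a b p.2
      then (Equiv.swap a b p.1, Equiv.swap a b p.2) else p with hF
  have hmaps : ∀ p ∈ invU, F p ∈ invW.erase (b, a) := by
    rintro ⟨p1, p2⟩ hp
    change (p1, p2) ∈ invU at hp
    rw [hinvU, Finset.mem_filter] at hp
    simp only [hinvU, mem_filter, mem_univ, true_and, Equiv.Perm.mul_apply] at hp
    obtain ⟨h12, hinv⟩ := hp
    by_cases hlt : Equiv.swap a b p1 < Equiv.swap a b p2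
    · simp only [hF, if_pos hlt]
      refine Finset.mem_erase.2 ⟨?_, ?_⟩
      · intro heq
        have h1 : Equiv.swap a b p1 = b := congrArg Prod.fst heq
        have h2 : Equiv.swap a b p2 = a := congrArg Prod.snd heq
        have hp1 : p1 = a := by
          have := congrArg (Equiv.swap a b) h1
          rwa [Equiv.swap_apply_self, Equiv.swap_apply_right] at this
        have hp2 : p2 = b := by
          have := congrArg (Equiv.swap a b) h2
          rwa [Equiv.swap_apply_self, Equiv.swap_apply_left] at this
        rw [hp1, hp2] at h12
        exact absurd (h12.trans hba) (lt_irrefl a)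
      · simp only [hinvW, mem_filter, mem_univ, true_and]
        exact ⟨hlt, hinv⟩
    · simp only [hF, if_neg hlt]
      have hne : Equiv.swap a b p1 ≠ Equiv.swap a b p2 :=
        fun h => (ne_of_lt h12) ((Equiv.swap a b).injective h)
      have hflip : Equiv.swap a b p2 < Equiv.swap a b p1 :=
        lt_of_le_of_ne (le_of_not_gt hlt) (Ne.symm hne)
      by_cases h1a : p1 = a
      · -- p1 = a : impossible (order would be preserved)
        have hp2a : p2 ≠ a := by
          intro h; rw [h1a, h] at h12; exact lt_irrefl _ h12
        have hp2b : p2 ≠ b := by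
          intro h; rw [h1a, h] at h12; exact absurd h12 (not_lt.2 hba.le)
        rw [h1a, Equiv.swap_apply_left,
          Equiv.swap_apply_of_ne_of_ne hp2a hp2b] at hflip
        rw [h1a] at h12
        exact absurd ((hflip.trans hba).trans h12) (lt_irrefl _)
      by_cases h1b : p1 = b
      · -- p1 = b
        by_cases h2a : p2 = a
        · rw [h1b, h2a, Equiv.swap_apply_left, Equiv.swap_apply_right] at hinv
          exact absurd (hinv.trans hwab) (lt_irrefl _)
        by_cases h2b : p2 = b
        · rw [h1b, h2b] at h12; exact absurd h12 (lt_irrefl _)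
        · rw [h1b, Equiv.swap_apply_right,
            Equiv.swap_apply_of_ne_of_ne h2a h2b] at hinv
          refine Finset.mem_erase.2 ⟨?_, ?_⟩
          · intro heq
            exact h2a (congrArg Prod.snd heq)
          · simp only [hinvW, mem_filter, mem_univ, true_and]
            rw [h1b] at h12 ⊢
            exact ⟨h12, hinv.trans hwab⟩
      · -- p1 ∉ {a, b}
        by_cases h2a : p2 = a
        · rw [h2a, Equiv.swap_apply_left,
            Equiv.swap_apply_of_ne_of_ne h1a h1b] at hinv
          refine Finset.mem_erase.2 ⟨?_, ?_⟩
          · intro heq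
            exact h1b (congrArg Prod.fst heq)
          · simp only [hinvW, mem_filter, mem_univ, true_and]
            refine ⟨h12, ?_⟩
            rw [h2a]
            exact hwab.trans hinv
        by_cases h2b : p2 = b
        · rw [h2b, Equiv.swap_apply_right,
            Equiv.swap_apply_of_ne_of_ne h1a h1b] at hflip
          rw [h2b] at h12
          exact absurd ((h12.trans hba).trans hflip) (lt_irrefl _)
        · rw [Equiv.swap_apply_of_ne_of_ne h1a h1b,
            Equiv.swap_apply_of_ne_of_ne h2a h2b] at hflip
          exact absurd (h12.trans hflip) (lt_irrefl _)
  have hinj : Set.InjOn F invU := by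
    rintro ⟨p1, p2⟩ hp ⟨q1, q2⟩ hq heq
    simp only [Finset.coe_filter, Set.mem_setOf_eq, hinvU, mem_univ, true_and] at hp hq
    have h12 := hp.1
    have h12' := hq.1
    simp only [hF] at heq
    by_cases h1 : Equiv.swap a b p1 < Equiv.swap a b p2 <;>
      by_cases h2 : Equiv.swap a b q1 < Equiv.swap a b q2
    · rw [if_pos h1, if_pos h2] at heq
      have e1 : Equiv.swap a b p1 = Equiv.swap a b q1 := congrArg Prod.fst heq
      have e2 : Equiv.swap a b p2 = Equiv.swap a b q2 := congrArg Prod.snd heq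
      exact Prod.ext ((Equiv.swap a b).injective e1) ((Equiv.swap a b).injective e2)
    · rw [if_pos h1, if_neg h2] at heq
      have e1 : Equiv.swap a b p1 = q1 := congrArg Prod.fst heq
      have e2 : Equiv.swap a b p2 = q2 := congrArg Prod.snd heq
      have hne : Equiv.swap a b q1 ≠ Equiv.swap a b q2 :=
        fun h => (ne_of_lt h12') ((Equiv.swap a b).injective h)
      have hflip : Equiv.swap a b q2 < Equiv.swap a b q1 :=
        lt_of_le_of_ne (le_of_not_gt h2) (Ne.symm hne)
      rw [← e1, ← e2, Equiv.swap_apply_self, Equiv.swap_apply_self] at hflip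
      exact absurd (h12.trans hflip) (lt_irrefl _)
    · rw [if_neg h1, if_pos h2] at heq
      have e1 : p1 = Equiv.swap a b q1 := congrArg Prod.fst heq
      have e2 : p2 = Equiv.swap a b q2 := congrArg Prod.snd heq
      have hne : Equiv.swap a b p1 ≠ Equiv.swap a b p2 :=
        fun h => (ne_of_lt h12) ((Equiv.swap a b).injective h)
      have hflip : Equiv.swap a b p2 < Equiv.swap a b p1 :=
        lt_of_le_of_ne (le_of_not_gt h1) (Ne.symm hne)
      rw [e1, e2, Equiv.swap_apply_self, Equiv.swap_apply_self] at hflip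
      exact absurd (h12'.trans hflip) (lt_irrefl _)
    · rw [if_neg h1, if_neg h2] at heq
      exact heq
  calc permLength (w * Equiv.swap a b) = invU.card := rfl
    _ ≤ (invW.erase (b, a)).card := Finset.card_le_card_of_injOn F hmaps hinj
    _ < invW.card := Finset.card_erase_lt_of_mem hba'
    _ = permLength w := rfl

theorem minimal_sorting_perm_sorts_shifted (N m : ℕ) (hm : m ≤ N) (Λ : Fin N → ℕ)
    (hΛa : ∀ i j : Fin N, (i : ℕ) < m → (j : ℕ) < m → i < j → Λ j < Λ i)
    (hΛs : ∀ i j : Fin N, m ≤ (i : ℕ) → i ≤ j → Λ j ≤ Λ i)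
    (w : Equiv.Perm (Fin N))
    (hw : Antitone (fun i => Λ (w⁻¹ i)))
    (hmin : ∀ u : Equiv.Perm (Fin N),
      Antitone (fun i => Λ (u⁻¹ i)) → permLength w ≤ permLength u) :
    Antitone (fun i => Λ (w⁻¹ i) + (if ((w⁻¹ i : Fin N) : ℕ) < m then 1 else 0)) := by
  -- Stability: for i < j with equal sorted values, w⁻¹ i < w⁻¹ j.
  have stable : ∀ i j : Fin N, i < j → Λ (w⁻¹ i) = Λ (w⁻¹ j) → w⁻¹ i < w⁻¹ j := by
    intro i j hij heq
    by_contra hcon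
    have hab : w⁻¹ j ≠ w⁻¹ i := by
      intro h
      exact (ne_of_lt hij) (w⁻¹.injective h).symm
    have hba : w⁻¹ j < w⁻¹ i := lt_of_le_of_ne (not_lt.1 hcon) hab
    have hwa : w (w⁻¹ i) = i := by simp
    have hwb : w (w⁻¹ j) = j := by simp
    have hwab : w (w⁻¹ i) < w (w⁻¹ j) := by rw [hwa, hwb]; exact hij
    have hantu : Antitone (fun k => Λ ((w * Equiv.swap (w⁻¹ i) (w⁻¹ j))⁻¹ k)) := by
      have hfun : (fun k => Λ ((w * Equiv.swap (w⁻¹ i) (w⁻¹ j))⁻¹ k))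
          = fun k => Λ (w⁻¹ k) := by
        funext k
        have hk : (w * Equiv.swap (w⁻¹ i) (w⁻¹ j))⁻¹ k
            = Equiv.swap (w⁻¹ i) (w⁻¹ j) (w⁻¹ k) := by
          rw [mul_inv_rev, Equiv.Perm.mul_apply, Equiv.swap_inv]
        rw [hk, swap_eval Λ _ _ _ heq]
      rw [hfun]
      exact hw
    have h1 := hmin _ hantu
    have h2 := permLength_swap_lt w (w⁻¹ i) (w⁻¹ j) hba hwab
    exact absurd h1 (not_le.2 h2)
  intro i j hij
  simp only
  rcases eq_or_lt_of_le hij with rfl | hlt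
  · exact le_refl _
  have hle : Λ (w⁻¹ j) ≤ Λ (w⁻¹ i) := hw hij
  rcases lt_or_eq_of_le hle with hstrict | heq
  · split_ifs <;> omega
  · have hab := stable i j hlt heq.symm
    have hjm : ¬ ((w⁻¹ j : Fin N) : ℕ) < m := by
      intro hjm
      have him : ((w⁻¹ i : Fin N) : ℕ) < m := lt_trans (by exact_mod_cast hab) hjm
      exact absurd heq.symm (ne_of_gt (hΛa _ _ him hjm hab))
    rw [if_neg hjm, heq]
    split_ifs <;> omega
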